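/- arXiv:2604.05234 — 2 statements merged into one kernel-verified Lean document; each statement's English description precedes it below -/
import Mathlib

section
/- Let D be an N×N real symmetric positive semidefinite matrix and let Q = (I + D)⁻¹. Then for all indices i ≠ j, the off-diagonal entries satisfy |Q_{ij}| ≤ √(D_{ii} · D_{jj}). -/
open Matrix

open scoped MatrixOrder in
/-- Off-diagonal bound for entries of a PSD matrix, via Cauchy–Schwarz on its square root. -/
lemma psd_entry_abs_le {n : ℕ} {P : Matrix (Fin n) (Fin n) ℝ} (hP : P.PosSemidef)
    (i j : Fin n) : |P i j| ≤ Real.sqrt (P i i * P j j) := by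
  set S := CFC.sqrt P with hSdef
  have hS : S * S = P := CFC.sqrt_mul_sqrt_self P hP.nonneg
  have hSh : S.IsHermitian := (CFC.sqrt_nonneg P).posSemidef.isHermitian
  have happ : ∀ a b, S a b = S b a := by
    intro a b
    conv_lhs => rw [← hSh.eq]
    simp [Matrix.conjTranspose_apply]
  have hPij : P i j = ∑ k, S i k * S j k := by
    rw [← hS, Matrix.mul_apply]
    exact Finset.sum_congr rfl fun k _ => by rw [happ k j]
  have hPii : P i i = ∑ k, S i k ^ 2 := by
    rw [← hS, Matrix.mul_apply]
    exact Finset.sum_congr rfl fun k _ => by rw [happ k i]; ring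
  have hPjj : P j j = ∑ k, S j k ^ 2 := by
    rw [← hS, Matrix.mul_apply]
    exact Finset.sum_congr rfl fun k _ => by rw [happ k j]; ring
  apply Real.abs_le_sqrt
  rw [hPij, hPii, hPjj]
  exact Finset.sum_mul_sq_le_sq_mul_sq _ _ _

/-- For a symmetric PSD matrix `D` and `Q = (I + D)⁻¹`, the off-diagonal entries satisfy
`|Q i j| ≤ √(D i i * D j j)`. -/
theorem stmt2 {N : ℕ} (D : Matrix (Fin N) (Fin N) ℝ) (hD : D.PosSemidef)
    (i j : Fin N) (hij : i ≠ j) :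
    |((1 + D)⁻¹) i j| ≤ Real.sqrt (D i i * D j j) := by
  set Q := (1 + D)⁻¹ with hQdef
  have h1 : (1 + D).PosDef := Matrix.PosDef.one.add_posSemidef hD
  have hu : IsUnit (1 + D).det := (Matrix.isUnit_iff_isUnit_det _).mp h1.isUnit
  have hmul : (1 + D) * Q = 1 := Matrix.mul_nonsing_inv _ hu
  have hmul' : Q * (1 + D) = 1 := Matrix.nonsing_inv_mul _ hu
  have hQpsd : Q.PosSemidef := h1.posSemidef.inv
  have hQh : Qᴴ = Q := hQpsd.isHermitian.eq
  have hQDQ : Q + D * Q = 1 := by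
    rw [← hmul, add_mul, one_mul]
  -- P := D * Q is PSD
  have hPeq : D * Q = Q * (D + D * D) * Q := by
    have : Q * (D + D * D) * Q = (Q * (1 + D)) * (D * Q) := by noncomm_ring
    rw [this, hmul', one_mul]
  have hDD : (D + D * D).PosSemidef := by
    have : D * D = Dᴴ * D := by rw [hD.isHermitian.eq]
    exact hD.add (this ▸ Matrix.posSemidef_conjTranspose_mul_self D)
  have hPpsd : (D * Q).PosSemidef := by
    rw [hPeq]
    have := hDD.conjTranspose_mul_mul_same Q
    rwa [hQh] at this
  -- D - D*Q is PSD
  have hone : (1 : Matrix (Fin N) (Fin N) ℝ) - Q = D * Q := by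
    rw [← hQDQ]; noncomm_ring
  have hDmP : D - D * Q = Q * (D * D + D * D * D) * Q := by
    have h2 : D - D * Q = D * (1 - Q) := by noncomm_ring
    rw [h2, hone]
    have : Q * (D * D + D * D * D) * Q = (Q * (1 + D)) * (D * (D * Q)) := by noncomm_ring
    rw [this, hmul', one_mul]
  have hD3 : (D * D + D * D * D).PosSemidef := by
    have e1 : D * D = Dᴴ * D := by rw [hD.isHermitian.eq]
    have e2 : D * D * D = Dᴴ * D * D := by rw [hD.isHermitian.eq]
    exact (e1 ▸ Matrix.posSemidef_conjTranspose_mul_self D).add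
      (e2 ▸ hD.conjTranspose_mul_mul_same D)
  have hDmPpsd : (D - D * Q).PosSemidef := by
    rw [hDmP]
    have := hD3.conjTranspose_mul_mul_same Q
    rwa [hQh] at this
  -- diagonal entries
  have diag_nonneg : ∀ (M : Matrix (Fin N) (Fin N) ℝ), M.PosSemidef → ∀ k, 0 ≤ M k k := by
    intro M hM k
    exact hM.diag_nonneg
  have hii : (D * Q) i i ≤ D i i := by
    have := diag_nonneg _ hDmPpsd i
    simp only [Matrix.sub_apply] at this; linarith
  have hjj : (D * Q) j j ≤ D j j := by
    have := diag_nonneg _ hDmPpsd j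
    simp only [Matrix.sub_apply] at this; linarith
  -- off-diagonal relation
  have hoff : Q i j = -(D * Q) i j := by
    have := congrArg (fun M => M i j) hQDQ
    simp only [Matrix.add_apply, Matrix.one_apply_ne hij] at this
    linarith
  rw [hoff, abs_neg]
  refine (psd_entry_abs_le hPpsd i j).trans (Real.sqrt_le_sqrt ?_)
  have h0i : (0:ℝ) ≤ D i i := (diag_nonneg _ hPpsd i).trans hii
  exact mul_le_mul hii hjj (diag_nonneg _ hPpsd j) h0i
end

section
/- Let D be an N×N real symmetric positive semidefinite matrix with D_{ii} ≤ c²/N for every i, and let x ∈ ℝᴺ with ‖x‖_∞ ≤ A. Then every entry of (I + D)⁻¹x is bounded in absolute value by A(1 + c²). -/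
open Matrix

/-- For a real PSD matrix, diagonal entries are nonnegative. -/
lemma psd_diag_nonneg {N : ℕ} {E : Matrix (Fin N) (Fin N) ℝ} (hE : E.PosSemidef)
    (i : Fin N) : 0 ≤ E i i := by
  have := hE.dotProduct_mulVec_nonneg (Pi.single i 1)
  simpa [Matrix.mulVec_single, single_dotProduct] using this

/-- For a real PSD matrix, `|E i j| ≤ (E i i + E j j)/2`. -/
lemma psd_abs_entry {N : ℕ} {E : Matrix (Fin N) (Fin N) ℝ} (hE : E.PosSemidef)
    (i j : Fin N) : |E i j| ≤ (E i i + E j j) / 2 := by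
  have hsym : E j i = E i j := by
    have := congrFun (congrFun hE.1 j) i
    simpa [Matrix.conjTranspose_apply] using this.symm
  have h1 := hE.dotProduct_mulVec_nonneg (Pi.single i 1 + Pi.single j 1)
  have h2 := hE.dotProduct_mulVec_nonneg (Pi.single i 1 - Pi.single j 1)
  simp only [star_trivial, Matrix.mulVec_add, Matrix.mulVec_sub, Matrix.mulVec_single,
    dotProduct_add, dotProduct_sub, add_dotProduct,
    sub_dotProduct, single_dotProduct, Pi.smul_apply, op_smul_eq_mul, Matrix.col_apply,
    one_mul, mul_one] at h1 h2
  rw [abs_le]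
  constructor <;> nlinarith [h1, h2]

/-- If `D` is symmetric PSD with `D i i ≤ c²/N` and `‖x‖_∞ ≤ A`, then every entry of
`(I + D)⁻¹ x` is bounded by `A (1 + c²)`. -/
theorem stmt3 {N : ℕ} (D : Matrix (Fin N) (Fin N) ℝ) (hD : D.PosSemidef)
    (c A : ℝ) (hc : 0 ≤ c) (hA : 0 ≤ A)
    (hDdiag : ∀ i, D i i ≤ c ^ 2 / N)
    (x : Fin N → ℝ) (hx : ∀ i, |x i| ≤ A) (i : Fin N) :
    |((1 + D)⁻¹ *ᵥ x) i| ≤ A * (1 + c ^ 2) := by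
  have hNpos : (0 : ℝ) < N := by exact_mod_cast i.pos
  set M : Matrix (Fin N) (Fin N) ℝ := 1 + D with hMdef
  have hM : M.PosDef := Matrix.PosDef.one.add_posSemidef hD
  have hdet : IsUnit M.det := hM.det_pos.ne'.isUnit
  have hinv : M⁻¹ * M = 1 := Matrix.nonsing_inv_mul M hdet
  have hinv' : M * M⁻¹ = 1 := Matrix.mul_nonsing_inv M hdet
  have hMinvH : M⁻¹.IsHermitian := hM.isHermitian.inv
  set E : Matrix (Fin N) (Fin N) ℝ := M⁻¹ * D with hEdef
  -- E is PSD
  have hE : E.PosSemidef := by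
    have h1 : E = M⁻¹ * (D + D ^ 2) * M⁻¹ := by
      have h2 : D + D ^ 2 = D * M := by rw [hMdef]; noncomm_ring
      rw [h2, Matrix.mul_assoc, Matrix.mul_assoc, hinv', Matrix.mul_one, hEdef]
    rw [h1]
    have := (hD.add (hD.pow 2)).mul_mul_conjTranspose_same M⁻¹
    rwa [hMinvH.eq] at this
  -- D - E is PSD
  have hDE : (D - E).PosSemidef := by
    have h1 : D - E = M⁻¹ * (D ^ 2 + D ^ 3) * M⁻¹ := by
      have h2 : D ^ 2 + D ^ 3 = D ^ 2 * M := by rw [hMdef]; noncomm_ring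
      rw [h2, Matrix.mul_assoc, Matrix.mul_assoc, hinv', Matrix.mul_one, hEdef]
      have h3 : D ^ 2 = M * D - D := by rw [hMdef]; noncomm_ring
      rw [h3, mul_sub, ← Matrix.mul_assoc, hinv, Matrix.one_mul]
    rw [h1]
    have := ((hD.pow 2).add (hD.pow 3)).mul_mul_conjTranspose_same M⁻¹
    rwa [hMinvH.eq] at this
  -- diagonal of E is bounded by c²/N
  have hEdiag : ∀ k, E k k ≤ c ^ 2 / N := fun k => by
    have h1 := psd_diag_nonneg hDE k
    have h2 := hDdiag k
    simp only [Matrix.sub_apply] at h1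
    linarith
  -- entries of E bounded by c²/N
  have hEij : ∀ j, |E i j| ≤ c ^ 2 / N := fun j => by
    have := psd_abs_entry hE i j
    have h1 := hEdiag i
    have h2 := hEdiag j
    linarith
  -- the identity (1+D)⁻¹ = 1 - E
  have hid : M⁻¹ = 1 - E := by
    have h1 : M⁻¹ * M = M⁻¹ + E := by rw [hMdef, mul_add, Matrix.mul_one, hEdef]
    rw [hinv] at h1
    exact eq_sub_of_add_eq h1.symm
  rw [hid]
  have hval : ((1 - E) *ᵥ x) i = x i - (E *ᵥ x) i := by
    simp [Matrix.sub_mulVec]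
  rw [hval]
  have hsum : |(E *ᵥ x) i| ≤ A * c ^ 2 := by
    have h1 : |(E *ᵥ x) i| ≤ ∑ j, |E i j * x j| := by
      simpa [Matrix.mulVec, dotProduct] using
        Finset.abs_sum_le_sum_abs (fun j => E i j * x j) Finset.univ
    have h2 : ∑ j, |E i j * x j| ≤ ∑ _j : Fin N, c ^ 2 / N * A := by
      refine Finset.sum_le_sum fun j _ => ?_
      rw [abs_mul]
      exact mul_le_mul (hEij j) (hx j) (abs_nonneg _) (by positivity)
    have h3 : ∑ _j : Fin N, c ^ 2 / N * A = A * c ^ 2 := by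
      rw [Finset.sum_const, Finset.card_univ, Fintype.card_fin, nsmul_eq_mul]
      field_simp
    linarith
  calc |x i - (E *ᵥ x) i| ≤ |x i| + |(E *ᵥ x) i| := abs_sub _ _
    _ ≤ A + A * c ^ 2 := add_le_add (hx i) hsum
    _ = A * (1 + c ^ 2) := by ring
end
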